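/- Let ÷ be an AGM contraction operator with contraction-compatible faithful assignment Ψ ↦ ≤_Ψ. Then ÷ satisfies (DP4): if Ψ ÷ β ⊭ ¬α then Ψ ÷ α ÷ β ⊭ ¬α, if and only if the assignment satisfies: whenever ω₁ ⊨ α, ω₂ ⊨ ¬α, and [[Ψ]] ⊆ [[¬α]], then ω₁ ≤_Ψ ω₂ implies ω₁ ≤_{Ψ÷α} ω₂. -/
import Mathlib


inductive Form (V : Type) : Type
  | var : V → Form V
  | falsum : Form V
  | imp : Form V → Form V → Form V

namespace Form

def eval {V : Type} (w : V → Bool) : Form V → Bool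
  | var v => w v
  | falsum => false
  | imp a b => !(eval w a) || eval w b

def neg {V : Type} (a : Form V) : Form V := imp a falsum

def top {V : Type} : Form V := neg falsum

def conj {V : Type} (a b : Form V) : Form V := neg (imp a (neg b))

end Form

/-- Worlds (propositional interpretations) over the signature `V`. -/
abbrev World (V : Type) := V → Bool

/-- Models of a single formula. -/
def FMod {V : Type} (a : Form V) : Set (World V) := {w | a.eval w = true}

/-- Models of a set of formulas. -/
def SMod {V : Type} (X : Set (Form V)) : Set (World V) := {w | ∀ a ∈ X, a.eval w = true}

/-- Deductive closure (consequence operator). -/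
def Cn {V : Type} (X : Set (Form V)) : Set (Form V) := {b | ∀ w ∈ SMod X, b.eval w = true}

/-- Minimal elements of a set of worlds w.r.t. a relation. -/
def minSet {V : Type} (S : Set (World V)) (r : World V → World V → Prop) : Set (World V) :=
  {w ∈ S | ∀ w' ∈ S, r w w'}

/-- Total preorder: total (hence reflexive) and transitive. -/
def TotalPre {V : Type} (r : World V → World V → Prop) : Prop :=
  (∀ x y, r x y ∨ r y x) ∧ (∀ x y z, r x y → r y z → r x z)

/-- A belief change operator over epistemic states `E`: each state has a
deductively closed belief set, and the operator maps a state and a formula to a state. -/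
structure BCO (V E : Type) where
  Bel : E → Set (Form V)
  closed : ∀ Ψ, Cn (Bel Ψ) = Bel Ψ
  op : E → Form V → E

/-- Models of (the belief set of) an epistemic state. -/
def stMod {V E : Type} (O : BCO V E) (Ψ : E) : Set (World V) := SMod (O.Bel Ψ)

/-- Faithful assignment: each `le Ψ` is a total preorder; models of `Ψ` are mutually
equivalent and strictly below non-models. -/
def Faithful {V E : Type} (O : BCO V E) (le : E → World V → World V → Prop) : Prop :=
  (∀ Ψ, TotalPre (le Ψ)) ∧
  (∀ Ψ w₁ w₂, w₁ ∈ stMod O Ψ → w₂ ∈ stMod O Ψ → le Ψ w₁ w₂) ∧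
  (∀ Ψ w₁ w₂, w₁ ∈ stMod O Ψ → w₂ ∉ stMod O Ψ → (le Ψ w₁ w₂ ∧ ¬ le Ψ w₂ w₁))

/-- Contraction-compatibility: `[[Ψ ÷ α]] = [[Ψ]] ∪ min([[¬α]], ≤_Ψ)`. -/
def ContrCompat {V E : Type} (O : BCO V E) (le : E → World V → World V → Prop) : Prop :=
  ∀ Ψ (α : Form V), stMod O (O.op Ψ α) = stMod O Ψ ∪ minSet (FMod α.neg) (le Ψ)

/-- Revision-compatibility: `[[Ψ * α]] = min([[α]], ≤_Ψ)`. -/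
def RevCompat {V E : Type} (O : BCO V E) (le : E → World V → World V → Prop) : Prop :=
  ∀ Ψ (α : Form V), stMod O (O.op Ψ α) = minSet (FMod α) (le Ψ)

/-- The AGM contraction postulates (C1)–(C7) for epistemic states. -/
def AGMContr {V E : Type} (O : BCO V E) : Prop :=
  (∀ Ψ α, O.Bel (O.op Ψ α) ⊆ O.Bel Ψ) ∧
  (∀ Ψ α, α ∉ O.Bel Ψ → O.Bel Ψ ⊆ O.Bel (O.op Ψ α)) ∧
  (∀ Ψ (α : Form V), ¬ (∀ w, w ∈ FMod α) → α ∉ O.Bel (O.op Ψ α)) ∧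
  (∀ Ψ α, O.Bel Ψ ⊆ Cn (O.Bel (O.op Ψ α) ∪ {α})) ∧
  (∀ Ψ α β, FMod α = FMod β → O.Bel (O.op Ψ α) = O.Bel (O.op Ψ β)) ∧
  (∀ Ψ (α β : Form V), O.Bel (O.op Ψ α) ∩ O.Bel (O.op Ψ β) ⊆ O.Bel (O.op Ψ (α.conj β))) ∧
  (∀ Ψ (α β : Form V), β ∉ O.Bel (O.op Ψ (α.conj β)) → O.Bel (O.op Ψ (α.conj β)) ⊆ O.Bel (O.op Ψ β))

/-- Unbiasedness: every consistent set of formulas has an epistemic state whose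
belief set is its deductive closure. -/
def Unbiased {V E : Type} (O : BCO V E) : Prop :=
  ∀ L : Set (Form V), (SMod L).Nonempty → ∃ Ψ : E, O.Bel Ψ = Cn L

lemma eval_neg {V : Type} (a : Form V) (w : World V) :
    a.neg.eval w = !a.eval w := by
  simp [Form.neg, Form.eval]

lemma eval_conj {V : Type} (a b : Form V) (w : World V) :
    (a.conj b).eval w = (a.eval w && b.eval w) := by
  simp [Form.conj, Form.neg, Form.eval]

/-- A formula true exactly at literal value `w v`. -/
def lit {V : Type} (w : World V) (v : V) : Form V :=
  if w v then Form.var v else (Form.var v).neg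

lemma eval_lit {V : Type} (w w' : World V) (v : V) :
    (lit w v).eval w' = true ↔ w' v = w v := by
  unfold lit
  by_cases h : w v <;> simp [h, Form.eval, eval_neg]

def conjList {V : Type} : List (Form V) → Form V
  | [] => Form.top
  | a :: l => a.conj (conjList l)

lemma eval_conjList {V : Type} (l : List (Form V)) (w : World V) :
    (conjList l).eval w = true ↔ ∀ a ∈ l, a.eval w = true := by
  induction l with
  | nil => simp [conjList, Form.top, eval_neg, Form.eval]
  | cons a l ih => simp [conjList, eval_conj, ih]

/-- A formula whose unique model is `w`. -/
noncomputable def formOfWorld {V : Type} [Fintype V] (w : World V) : Form V :=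
  conjList ((Finset.univ : Finset V).toList.map (lit w))

lemma eval_formOfWorld {V : Type} [Fintype V] (w w' : World V) :
    (formOfWorld w).eval w' = true ↔ w' = w := by
  unfold formOfWorld
  rw [eval_conjList]
  constructor
  · intro h
    funext v
    have := h (lit w v) (by simp)
    exact (eval_lit w w' v).1 this
  · rintro rfl a ha
    simp only [List.mem_map] at ha
    obtain ⟨v, _, rfl⟩ := ha
    exact (eval_lit _ _ v).2 rfl

/-- Characterization of non-belief of `¬α` via models. -/
lemma negMem_iff {V E : Type} (O : BCO V E) (Φ : E) (α : Form V) :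
    α.neg ∉ O.Bel Φ ↔ ∃ w ∈ stMod O Φ, α.eval w = true := by
  constructor
  · intro h
    by_contra hc
    push_neg at hc
    apply h
    rw [← O.closed Φ]
    intro w hw
    rw [eval_neg]
    have := hc w hw
    simp [this]
  · rintro ⟨w, hw, hv⟩ hmem
    rw [← O.closed Φ] at hmem
    have := hmem w hw
    rw [eval_neg, hv] at this
    simp at this

lemma exists_min_finset {α : Type} (r : α → α → Prop)
    (tot : ∀ x y, r x y ∨ r y x) (htr : ∀ x y z, r x y → r y z → r x z)
    (s : Finset α) : s.Nonempty → ∃ m ∈ s, ∀ x ∈ s, r m x := by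
  classical
  induction s using Finset.induction_on with
  | empty => intro h; simp at h
  | @insert a s ha ih =>
    intro _
    by_cases hs : s.Nonempty
    · obtain ⟨m, hm, hmin⟩ := ih hs
      rcases tot a m with h | h
      · refine ⟨a, Finset.mem_insert_self _ _, ?_⟩
        intro x hx
        rcases Finset.mem_insert.1 hx with rfl | hx
        · rcases tot x x with h' | h' <;> exact h'
        · exact htr _ _ _ h (hmin x hx)
      · refine ⟨m, Finset.mem_insert_of_mem hm, ?_⟩
        intro x hx
        rcases Finset.mem_insert.1 hx with rfl | hx
        · exact h
        · exact hmin x hx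
    · rw [Finset.not_nonempty_iff_eq_empty] at hs
      subst hs
      refine ⟨a, Finset.mem_insert_self _ _, ?_⟩
      intro x hx
      rcases Finset.mem_insert.1 hx with rfl | hx
      · rcases tot x x with h' | h' <;> exact h'
      · simp at hx

lemma exists_min_set {V : Type} [Fintype V] (S : Set (World V))
    (hS : S.Nonempty) (r : World V → World V → Prop)
    (tot : ∀ x y, r x y ∨ r y x) (htr : ∀ x y z, r x y → r y z → r x z) :
    (minSet S r).Nonempty := by
  classical
  have hfin : S.Finite := Set.toFinite S
  obtain ⟨m, hm, hmin⟩ := exists_min_finset r tot htr hfin.toFinset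
    (by rwa [Set.Finite.toFinset_nonempty])
  refine ⟨m, hfin.mem_toFinset.1 hm, fun x hx => hmin x (hfin.mem_toFinset.2 hx)⟩

/-- (DP4) holds iff the assignment satisfies (IR4ʳᵉˡ_÷). -/
theorem stmt_8 {V E : Type} [Fintype V] (O : BCO V E)
    (le : E → World V → World V → Prop)
    (hA : AGMContr O) (hF : Faithful O le) (hC : ContrCompat O le)
    (hU : Unbiased O) :
    (∀ (Ψ : E) (α β : Form V),
        α.neg ∉ O.Bel (O.op Ψ β) → α.neg ∉ O.Bel (O.op (O.op Ψ α) β)) ↔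
    (∀ (Ψ : E) (α : Form V) (ω₁ ω₂ : World V),
        ω₁ ∈ FMod α → ω₂ ∈ FMod α.neg → stMod O Ψ ⊆ FMod α.neg →
          le Ψ ω₁ ω₂ → le (O.op Ψ α) ω₁ ω₂) := by
  obtain ⟨hTP, hEq, hStr⟩ := hF
  have tot : ∀ Φ x y, le Φ x y ∨ le Φ y x := fun Φ => (hTP Φ).1
  have htr : ∀ Φ x y z, le Φ x y → le Φ y z → le Φ x z := fun Φ => (hTP Φ).2
  have hrefl : ∀ Φ x, le Φ x x := fun Φ x => by rcases tot Φ x x with h | h <;> exact h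
  constructor
  · -- DP4 → IR4
    intro hDP Ψ α ω₁ ω₂ h1 h2 hsub hle
    set β : Form V := (Form.imp (formOfWorld ω₁).neg (formOfWorld ω₂)).neg with hβ
    have evβ : ∀ w, β.neg.eval w =
        ((formOfWorld ω₁).eval w || (formOfWorld ω₂).eval w) := by
      intro w
      simp [hβ, Form.eval, Form.neg]
    have hβmod : FMod β.neg = {ω₁, ω₂} := by
      ext w
      simp only [FMod, Set.mem_setOf_eq, Set.mem_insert_iff, Set.mem_singleton_iff]
      rw [evβ, Bool.or_eq_true, eval_formOfWorld, eval_formOfWorld]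
    have h1' : α.eval ω₁ = true := h1
    have h2' : α.eval ω₂ = false := by
      have : α.neg.eval ω₂ = true := h2
      rw [eval_neg] at this; simpa using this
    -- ω₁ is in stMod (op Ψ β)
    have hpre : α.neg ∉ O.Bel (O.op Ψ β) := by
      rw [negMem_iff]
      refine ⟨ω₁, ?_, h1'⟩
      rw [show stMod O (O.op Ψ β) = _ from hC Ψ β]
      right
      refine ⟨by rw [hβmod]; left; rfl, ?_⟩
      intro w' hw'
      rw [hβmod] at hw'
      rcases hw' with rfl | rfl
      · exact hrefl Ψ w'
      · exact hle
    have hpost := hDP Ψ α β hpre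
    rw [negMem_iff] at hpost
    obtain ⟨w, hw, hwα⟩ := hpost
    rw [show stMod O (O.op (O.op Ψ α) β) = _ from hC (O.op Ψ α) β] at hw
    have hopsub : stMod O (O.op Ψ α) ⊆ FMod α.neg := by
      rw [show stMod O (O.op Ψ α) = _ from hC Ψ α]
      rintro x (hx | hx)
      · exact hsub hx
      · exact hx.1
    rcases hw with hw | hw
    · exfalso
      have := hopsub hw
      rw [FMod, Set.mem_setOf_eq, eval_neg, hwα] at this
      simpa using this
    · obtain ⟨hwmem, hwmin⟩ := hw
      rw [hβmod] at hwmem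
      rcases hwmem with rfl | rfl
      · exact hwmin ω₂ (by rw [hβmod]; right; rfl)
      · rw [hwα] at h2'; simp at h2'
  · -- IR4 → DP4
    intro hIR Ψ α β hpre
    rw [negMem_iff] at hpre ⊢
    obtain ⟨ω, hω, hωα⟩ := hpre
    by_cases hsub : stMod O Ψ ⊆ FMod α.neg
    · rw [show stMod O (O.op Ψ β) = _ from hC Ψ β] at hω
      have hωnot : ω ∉ stMod O Ψ := by
        intro h
        have := hsub h
        rw [FMod, Set.mem_setOf_eq, eval_neg, hωα] at this
        simpa using this
      have hωmin : ω ∈ minSet (FMod β.neg) (le Ψ) := by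
        rcases hω with h | h
        · exact absurd h hωnot
        · exact h
      -- get a minimal element of FMod β.neg under le (op Ψ α)
      obtain ⟨μ, hμmem, hμmin⟩ := exists_min_set (FMod β.neg) ⟨ω, hωmin.1⟩
        (le (O.op Ψ α)) (tot _) (htr _)
      by_cases hμα : α.eval μ = true
      · refine ⟨μ, ?_, hμα⟩
        rw [show stMod O (O.op (O.op Ψ α) β) = _ from hC (O.op Ψ α) β]
        right
        exact ⟨hμmem, hμmin⟩
      · -- μ ⊨ ¬α, so ω ≤_{Ψ÷α} μ by IR4, hence ω is also minimal
        have hμneg : μ ∈ FMod α.neg := by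
          rw [FMod, Set.mem_setOf_eq, eval_neg]
          simp only [Bool.not_eq_true] at hμα
          simp [hμα]
        have hle1 : le Ψ ω μ := hωmin.2 μ hμmem
        have hle2 : le (O.op Ψ α) ω μ := hIR Ψ α ω μ hωα hμneg hsub hle1
        refine ⟨ω, ?_, hωα⟩
        rw [show stMod O (O.op (O.op Ψ α) β) = _ from hC (O.op Ψ α) β]
        right
        exact ⟨hωmin.1, fun w' hw' => htr _ _ _ _ hle2 (hμmin w' hw')⟩
    · -- some model of Ψ satisfies α
      rw [Set.not_subset] at hsub
      obtain ⟨w, hw, hwn⟩ := hsub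
      have hwα : α.eval w = true := by
        by_contra h
        apply hwn
        rw [FMod, Set.mem_setOf_eq, eval_neg]
        simp only [Bool.not_eq_true] at h
        simp [h]
      refine ⟨w, ?_, hwα⟩
      rw [show stMod O (O.op (O.op Ψ α) β) = _ from hC (O.op Ψ α) β]
      left
      rw [show stMod O (O.op Ψ α) = _ from hC Ψ α]
      left
      exact hw
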